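/- The 4×4 matrix R = (1/4)·Σ_{i=0}^{3} ⟨σ_i, σ_i⟩ σ_i ⊗ σ_i with ⟨σ_i,σ_i⟩ = 1 for i = 1,2,3 together with the additional nonzero terms ⟨I,I⟩ = ⟨Z,I⟩ = ⟨I,Z⟩ = 1, i.e. R = (1/4)(I⊗I + X⊗X + Y⊗Y + Z⊗Z + Z⊗I + I⊗Z), has eigenvalues 0, 1, 1/2, and −1/2; in particular R is Hermitian with trace 1 but not positive semidefinite. -/

import Mathlib

open Matrix ComplexOrder

open Kronecker

noncomputable def σx : Matrix (Fin 2) (Fin 2) ℂ := !![0, 1; 1, 0]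
noncomputable def σy : Matrix (Fin 2) (Fin 2) ℂ := !![0, -Complex.I; Complex.I, 0]
noncomputable def σz : Matrix (Fin 2) (Fin 2) ℂ := !![1, 0; 0, -1]

/-- The pseudo-density matrix R = (1/4)(I⊗I + X⊗X + Y⊗Y + Z⊗Z + Z⊗I + I⊗Z). -/
noncomputable def Rex : Matrix (Fin 2 × Fin 2) (Fin 2 × Fin 2) ℂ :=
  (1 / 4 : ℂ) • (1 + σx ⊗ₖ σx + σy ⊗ₖ σy + σz ⊗ₖ σz + σz ⊗ₖ 1 + 1 ⊗ₖ σz)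

def e4 : Fin 2 × Fin 2 ≃ Fin 4 := finProdFinEquiv

noncomputable def M4 : Matrix (Fin 4) (Fin 4) ℂ :=
  !![1,0,0,0; 0,0,1/2,0; 0,1/2,0,0; 0,0,0,0]

lemma Rex_eq : Rex = M4.submatrix e4 e4 := by
  ext ⟨i,j⟩ ⟨k,l⟩
  fin_cases i <;> fin_cases j <;> fin_cases k <;> fin_cases l <;>
    simp [Rex, M4, σx, σy, σz, Matrix.one_apply, e4, finProdFinEquiv, vecHead, vecTail,
      Prod.ext_iff] <;> norm_num

lemma M4_herm : M4.IsHermitian := by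
  ext i j
  fin_cases i <;> fin_cases j <;>
    simp [M4, Matrix.conjTranspose_apply, vecHead, vecTail]

lemma tr1 : Rex.trace = 1 := by
  simp [Rex_eq, Matrix.trace, Fintype.sum_prod_type, Fin.sum_univ_two, M4,
    e4, finProdFinEquiv, Matrix.diag, vecHead, vecTail]

lemma det4 (A : Matrix (Fin 4) (Fin 4) ℂ) :
    A.det =
      A 0 0 * A 1 1 * A 2 2 * A 3 3 - A 0 0 * A 1 1 * A 2 3 * A 3 2 - A 0 0 * A 1 2 * A 2 1 * A 3 3 +
      A 0 0 * A 1 2 * A 2 3 * A 3 1 + A 0 0 * A 1 3 * A 2 1 * A 3 2 - A 0 0 * A 1 3 * A 2 2 * A 3 1 -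
      A 0 1 * A 1 0 * A 2 2 * A 3 3 + A 0 1 * A 1 0 * A 2 3 * A 3 2 + A 0 1 * A 1 2 * A 2 0 * A 3 3 -
      A 0 1 * A 1 2 * A 2 3 * A 3 0 - A 0 1 * A 1 3 * A 2 0 * A 3 2 + A 0 1 * A 1 3 * A 2 2 * A 3 0 +
      A 0 2 * A 1 0 * A 2 1 * A 3 3 - A 0 2 * A 1 0 * A 2 3 * A 3 1 - A 0 2 * A 1 1 * A 2 0 * A 3 3 +
      A 0 2 * A 1 1 * A 2 3 * A 3 0 + A 0 2 * A 1 3 * A 2 0 * A 3 1 - A 0 2 * A 1 3 * A 2 1 * A 3 0 -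
      A 0 3 * A 1 0 * A 2 1 * A 3 2 + A 0 3 * A 1 0 * A 2 2 * A 3 1 + A 0 3 * A 1 1 * A 2 0 * A 3 2 -
      A 0 3 * A 1 1 * A 2 2 * A 3 0 - A 0 3 * A 1 2 * A 2 0 * A 3 1 + A 0 3 * A 1 2 * A 2 1 * A 3 0 := by
  rw [Matrix.det_succ_row_zero, Fin.sum_univ_four]
  simp (config := {decide := true}) [Matrix.det_fin_three, Matrix.submatrix_apply,
    Fin.succAbove, Fin.lt_def, Fin.succ, Fin.castSucc, Fin.castAdd, Fin.castLE]
  ring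

lemma det_key (x : ℂ) :
    (algebraMap ℂ (Matrix (Fin 2 × Fin 2) (Fin 2 × Fin 2) ℂ) x - Rex).det
      = (x - 1) * x * (x - 1/2) * (x + 1/2) := by
  have h1 : algebraMap ℂ (Matrix (Fin 2 × Fin 2) (Fin 2 × Fin 2) ℂ) x
      = (algebraMap ℂ (Matrix (Fin 4) (Fin 4) ℂ) x).submatrix e4 e4 := by
    ext p q
    simp only [Matrix.algebraMap_matrix_apply, Matrix.submatrix_apply,
      EmbeddingLike.apply_eq_iff_eq]
  rw [Rex_eq, h1]
  have h2 : ((algebraMap ℂ (Matrix (Fin 4) (Fin 4) ℂ) x).submatrix e4 e4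
      - M4.submatrix e4 e4)
      = (algebraMap ℂ (Matrix (Fin 4) (Fin 4) ℂ) x - M4).submatrix ⇑e4 ⇑e4 := rfl
  rw [h2, Matrix.det_submatrix_equiv_self, det4]
  simp [Matrix.algebraMap_matrix_apply, M4, vecHead, vecTail]
  ring

lemma spec : spectrum ℂ Rex = {0, 1, 1 / 2, -(1 / 2)} := by
  ext x
  rw [spectrum.mem_iff, Matrix.isUnit_iff_isUnit_det, isUnit_iff_ne_zero, not_not, det_key]
  simp only [mul_eq_zero, sub_eq_zero, add_eq_zero_iff_eq_neg]
  constructor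
  · rintro (((h | h) | h) | h) <;> simp [h]
  · intro h
    rcases h with h | h | h | h <;> simp_all

lemma not_psd : ¬ Rex.PosSemidef := by
  intro h
  have h2 := (Matrix.posSemidef_iff_dotProduct_mulVec.mp h).2 (fun p => if p = (0,1) then 1 else if p = (1,0) then -1 else 0)
  rw [Rex_eq] at h2
  simp [dotProduct, Matrix.mulVec, Fintype.sum_prod_type, Fin.sum_univ_two,
    M4, e4, finProdFinEquiv, vecHead, vecTail, Prod.ext_iff] at h2
  norm_num [Complex.le_def] at h2

theorem pdm_example :
    Rex.IsHermitian ∧ Rex.trace = 1 ∧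
      spectrum ℂ Rex = {0, 1, 1 / 2, -(1 / 2)} ∧ ¬ Rex.PosSemidef := by
  refine ⟨?_, tr1, spec, not_psd⟩
  rw [Rex_eq]
  exact M4_herm.submatrix _
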